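/- Let F be a rooted forest with n vertices in which every vertex has at most one parent, and let E be a set of at most m edges of F. Let C be the collection of connected components of F − E. Then C can be partitioned into two subfamilies C₁ and C₂ such that for each i ∈ {1,2}, the number of edges of E needed to separate all components of Cᵢ from each other within F is at most ⌊m/2⌋. -/

import Mathlib

/-- Separation-cost partition lemma. `S` is the collection of connected components of
`F - E`, `tree` assigns to each component the tree of `F` containing it, and the cost
of a subfamily `S'` is `∑_T (#components of S' in T − 1)` (the number of edges of `E`
needed to separate the components of `S'` from each other). If `cost S ≤ m`, then `S`
splits into two subfamilies of cost at most `⌊m/2⌋` each. -/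
theorem stmt3 {α β : Type*} [DecidableEq α] [DecidableEq β]
    (m : ℕ) (S : Finset α) (tree : α → β)
    (cost : Finset α → ℕ)
    (hcost : ∀ S' : Finset α,
      cost S' = ∑ t ∈ S'.image tree, ((S'.filter (fun x => tree x = t)).card - 1))
    (hS : cost S ≤ m) :
    ∃ S₁ ⊆ S, cost S₁ ≤ m / 2 ∧ cost (S \ S₁) ≤ m / 2 := by
  -- Key identity: cost A + #(trees of A) = #A.
  have key : ∀ A : Finset α, cost A + (A.image tree).card = A.card := by
    intro A
    have hpt : ∀ t ∈ A.image tree,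
        ((A.filter (fun x => tree x = t)).card - 1) + 1
          = (A.filter (fun x => tree x = t)).card := by
      intro t ht
      obtain ⟨a, ha, rfl⟩ := Finset.mem_image.mp ht
      have hne : (A.filter (fun x => tree x = tree a)).Nonempty :=
        ⟨a, Finset.mem_filter.mpr ⟨ha, rfl⟩⟩
      have := Finset.card_pos.mpr hne
      omega
    calc cost A + (A.image tree).card
        = ∑ t ∈ A.image tree, (((A.filter (fun x => tree x = t)).card - 1) + 1) := by
          rw [hcost, Finset.sum_add_distrib, Finset.sum_const, smul_eq_mul, mul_one]
      _ = ∑ t ∈ A.image tree, (A.filter (fun x => tree x = t)).card :=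
          Finset.sum_congr rfl hpt
      _ = A.card := (Finset.card_eq_sum_card_image tree A).symm
  have hcost_empty : cost ∅ = 0 := by
    have := key ∅; simpa using this
  -- Family of admissible subsets.
  set P : Finset (Finset α) := S.powerset.filter (fun T => cost T ≤ m / 2) with hP
  have hPne : P.Nonempty := by
    refine ⟨∅, Finset.mem_filter.mpr ⟨Finset.empty_mem_powerset S, ?_⟩⟩
    simp [hcost_empty]
  obtain ⟨S₁, hS₁P, hmax⟩ := P.exists_max_image Finset.card hPne
  have hS₁sub : S₁ ⊆ S := Finset.mem_powerset.mp (Finset.mem_filter.mp hS₁P).1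
  have hS₁cost : cost S₁ ≤ m / 2 := (Finset.mem_filter.mp hS₁P).2
  refine ⟨S₁, hS₁sub, hS₁cost, ?_⟩
  set B := S \ S₁ with hB
  by_cases hBe : B = ∅
  · rw [hBe, hcost_empty]; exact Nat.zero_le _
  · -- every element of B has its tree in the image of S₁
    have htree : ∀ x ∈ B, tree x ∈ S₁.image tree := by
      intro x hx
      by_contra hnot
      have hxS : x ∈ S := (Finset.mem_sdiff.mp hx).1
      have hxnS₁ : x ∉ S₁ := (Finset.mem_sdiff.mp hx).2
      have himg : (insert x S₁).image tree = insert (tree x) (S₁.image tree) :=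
        Finset.image_insert tree x S₁
      have hcard : ((insert x S₁).image tree).card = (S₁.image tree).card + 1 := by
        rw [himg, Finset.card_insert_of_notMem hnot]
      have hk1 := key (insert x S₁)
      have hk2 := key S₁
      have hci : (insert x S₁).card = S₁.card + 1 := Finset.card_insert_of_notMem hxnS₁
      have hcosteq : cost (insert x S₁) ≤ m / 2 := by omega
      have hmem : insert x S₁ ∈ P := by
        refine Finset.mem_filter.mpr ⟨Finset.mem_powerset.mpr ?_, hcosteq⟩
        exact Finset.insert_subset hxS hS₁sub
      have := hmax _ hmem
      omega
    have himB : B.image tree ⊆ S₁.image tree := by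
      intro t ht
      obtain ⟨x, hx, rfl⟩ := Finset.mem_image.mp ht
      exact htree x hx
    -- image of S equals image of S₁
    have hunion : S₁ ∪ B = S := Finset.union_sdiff_of_subset hS₁sub
    have himS : S.image tree = S₁.image tree := by
      rw [← hunion, Finset.image_union]
      exact Finset.union_eq_left.mpr himB
    -- B nonempty, so its image is nonempty
    have hBne : B.Nonempty := Finset.nonempty_iff_ne_empty.mpr hBe
    have hBim : 1 ≤ (B.image tree).card :=
      Finset.card_pos.mpr (hBne.image tree)
    -- cost S₁ ≥ m/2 : take some x in B, inserting it must exceed m/2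
    obtain ⟨x, hx⟩ := hBne
    have hxS : x ∈ S := (Finset.mem_sdiff.mp hx).1
    have hxnS₁ : x ∉ S₁ := (Finset.mem_sdiff.mp hx).2
    have hS₁lb : m / 2 ≤ cost S₁ := by
      have hk1 := key (insert x S₁)
      have hk2 := key S₁
      have hci : (insert x S₁).card = S₁.card + 1 := Finset.card_insert_of_notMem hxnS₁
      have himg : (insert x S₁).image tree = insert (tree x) (S₁.image tree) :=
        Finset.image_insert tree x S₁
      have hcardeq : ((insert x S₁).image tree).card = (S₁.image tree).card := by
        rw [himg, Finset.insert_eq_self.mpr (htree x hx)]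
      by_contra hlt
      push_neg at hlt
      have hcosteq : cost (insert x S₁) ≤ m / 2 := by omega
      have hmem : insert x S₁ ∈ P := by
        refine Finset.mem_filter.mpr ⟨Finset.mem_powerset.mpr ?_, hcosteq⟩
        exact Finset.insert_subset hxS hS₁sub
      have := hmax _ hmem
      omega
    -- cardinalities
    have hcardS : S.card = S₁.card + B.card := by
      have h1 : B.card = S.card - S₁.card := Finset.card_sdiff_of_subset hS₁sub
      have h2 : S₁.card ≤ S.card := Finset.card_le_card hS₁sub
      omega
    have hkS := key S
    have hkS₁ := key S₁
    have hkB := key B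
    rw [himS] at hkS
    omega
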